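/- arXiv:2109.02493 — 4 statements merged into one kernel-verified Lean document; each statement's English description precedes it below -/
import Mathlib

section
/- Let d ≥ 1, δ > 0 and let μ, ν be Borel probability measures on ℝ^d belonging to P_log(ℝ^d). Then D_δ(μ,ν) ≤ ( D̃_δ(μ,ν) / log 2 )^{1/2} + D̃_δ(μ,ν). -/
open MeasureTheory ENNReal Filter
open scoped Topology

noncomputable section

abbrev Euc (d : ℕ) := EuclideanSpace ℝ (Fin d)

/-- The set of couplings of two measures on `Euc d`: probability measures on the product
whose first and second marginals are `μ` and `ν` respectively. -/
def couplings {d : ℕ} (μ ν : Measure (Euc d)) : Set (Measure (Euc d × Euc d)) :=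
  {π | IsProbabilityMeasure π ∧ π.map Prod.fst = μ ∧ π.map Prod.snd = ν}

/-- Kantorovich–Rubinstein functional `D̃_δ` with cost `log(|x-y|²/δ² + 1)`. -/
def KRt (d : ℕ) (δ : ℝ) (μ ν : Measure (Euc d)) : ℝ≥0∞ :=
  ⨅ π ∈ couplings μ ν,
    ∫⁻ p, ENNReal.ofReal (Real.log (‖p.1 - p.2‖ ^ 2 / δ ^ 2 + 1)) ∂π

/-- Kantorovich–Rubinstein functional `D_δ` with cost `log(|x-y|/δ + 1)`. -/
def KR (d : ℕ) (δ : ℝ) (μ ν : Measure (Euc d)) : ℝ≥0∞ :=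
  ⨅ π ∈ couplings μ ν,
    ∫⁻ p, ENNReal.ofReal (Real.log (‖p.1 - p.2‖ / δ + 1)) ∂π

/-- `μ ∈ P_log(ℝ^d)`: finite logarithmic moment. -/
def Plog {d : ℕ} (μ : Measure (Euc d)) : Prop :=
  ∫⁻ x, ENNReal.ofReal (Real.log (1 + ‖x‖)) ∂μ < ⊤

/-- Key real inequality: `log(1+s)² ≤ log(1+s²)` on `[0,1]`. -/
lemma aux_sq_log_le {s : ℝ} (h0 : 0 ≤ s) (h1 : s ≤ 1) :
    (Real.log (s + 1)) ^ 2 ≤ Real.log (s ^ 2 + 1) := by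
  set g : ℝ → ℝ := fun x => Real.log (x ^ 2 + 1) - (Real.log (x + 1)) ^ 2 with hg
  have hderiv : ∀ x ∈ Set.Ioo (0:ℝ) 1, HasDerivAt g
      (2 * x / (x ^ 2 + 1) - 2 * Real.log (x + 1) * (1 / (x + 1))) x := by
    intro x hx
    have hx1 : (0:ℝ) < x + 1 := by linarith [hx.1]
    have hA : HasDerivAt (fun x : ℝ => Real.log (x ^ 2 + 1)) (2 * x / (x ^ 2 + 1)) x := by
      have h : HasDerivAt (fun x : ℝ => x ^ 2 + 1) (2 * x) x := by
        simpa using (hasDerivAt_pow 2 x).add_const 1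
      simpa using h.log (by positivity)
    have hB : HasDerivAt (fun x : ℝ => (Real.log (x + 1)) ^ 2)
        (2 * Real.log (x + 1) * (1 / (x + 1))) x := by
      have h0 : HasDerivAt (fun x : ℝ => x + 1) 1 x := (hasDerivAt_id x).add_const 1
      have hl : HasDerivAt (fun x : ℝ => Real.log (x + 1)) (1 / (x + 1)) x := by
        simpa using h0.log (ne_of_gt hx1)
      simpa using hl.fun_pow 2
    simpa using hA.fun_sub hB
  have hmono : MonotoneOn g (Set.Icc (0:ℝ) 1) := by
    apply monotoneOn_of_deriv_nonneg (convex_Icc 0 1)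
    · apply ContinuousOn.sub
      · exact (ContinuousOn.log (by fun_prop) (fun x _ => by positivity))
      · exact (ContinuousOn.log (by fun_prop)
          (fun x hx => by have := hx.1; intro h; linarith)).pow 2
    · intro x hx
      rw [interior_Icc] at hx
      exact ((hderiv x hx).differentiableAt).differentiableWithinAt
    · intro x hx
      rw [interior_Icc] at hx
      rw [(hderiv x hx).deriv]
      have hx1 : (0:ℝ) < x + 1 := by linarith [hx.1]
      have hlog : Real.log (x + 1) ≤ x := by
        have := Real.log_le_sub_one_of_pos hx1
        linarith
      have hL0 : 0 ≤ Real.log (x + 1) := Real.log_nonneg (by linarith [hx.1])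
      have key : 2 * Real.log (x + 1) * (1 / (x + 1)) ≤ 2 * x / (x ^ 2 + 1) := by
        rw [mul_one_div, div_le_div_iff₀ hx1 (by positivity)]
        nlinarith [hx.1.le, hx.2.le,
          mul_le_mul_of_nonneg_right hlog (by positivity : (0:ℝ) ≤ x ^ 2 + 1)]
      linarith
  have h00 : (0:ℝ) ∈ Set.Icc (0:ℝ) 1 := by norm_num
  have hs : s ∈ Set.Icc (0:ℝ) 1 := ⟨h0, h1⟩
  have := hmono h00 hs h0
  have hg0 : g 0 = 0 := by norm_num [hg]
  rw [hg0] at this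
  simp only [hg] at this
  linarith

/-- Pointwise cost comparison. -/
lemma aux_pointwise {δ : ℝ} (hδ : 0 < δ) (r : ℝ) (hr : 0 ≤ r) :
    ENNReal.ofReal (Real.log (r / δ + 1)) ≤
      (ENNReal.ofReal (Real.log (r ^ 2 / δ ^ 2 + 1))) ^ ((1:ℝ)/2)
        + ENNReal.ofReal (Real.log (r ^ 2 / δ ^ 2 + 1)) := by
  have hsq : r ^ 2 / δ ^ 2 = (r / δ) ^ 2 := (div_pow r δ 2).symm
  rw [hsq]
  set s := r / δ with hs
  have hs0 : 0 ≤ s := div_nonneg hr hδ.le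
  have hL0 : 0 ≤ Real.log (s ^ 2 + 1) := Real.log_nonneg (by nlinarith)
  rcases le_or_gt s 1 with h | h
  · have hf0 : 0 ≤ Real.log (s + 1) := Real.log_nonneg (by linarith)
    have hsq_le : (Real.log (s + 1)) ^ 2 ≤ Real.log (s ^ 2 + 1) := aux_sq_log_le hs0 h
    have hle : Real.log (s + 1) ≤ (Real.log (s ^ 2 + 1)) ^ ((1:ℝ)/2) := by
      rw [← Real.sqrt_eq_rpow]
      have := Real.sqrt_le_sqrt hsq_le
      rwa [Real.sqrt_sq hf0] at this
    calc ENNReal.ofReal (Real.log (s + 1))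
        ≤ ENNReal.ofReal ((Real.log (s ^ 2 + 1)) ^ ((1:ℝ)/2)) := ENNReal.ofReal_le_ofReal hle
      _ = (ENNReal.ofReal (Real.log (s ^ 2 + 1))) ^ ((1:ℝ)/2) :=
          (ENNReal.ofReal_rpow_of_nonneg hL0 (by norm_num : (0:ℝ) ≤ 1/2)).symm
      _ ≤ _ := le_self_add
  · have hle : Real.log (s + 1) ≤ Real.log (s ^ 2 + 1) := by
      apply Real.log_le_log (by linarith)
      nlinarith
    exact le_trans (ENNReal.ofReal_le_ofReal hle) le_add_self

/-- Cauchy–Schwarz for the square root under a probability measure. -/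
lemma aux_CS {α : Type*} [MeasurableSpace α] (π : Measure α) [IsProbabilityMeasure π]
    {L : α → ℝ≥0∞} (hL : AEMeasurable L π) :
    ∫⁻ a, (L a) ^ ((1:ℝ)/2) ∂π ≤ (∫⁻ a, L a ∂π) ^ ((1:ℝ)/2) := by
  have h2 : Real.HolderConjugate 2 2 := Real.HolderConjugate.two_two
  have hH := ENNReal.lintegral_mul_le_Lp_mul_Lq π h2
    (f := fun a => L a ^ ((1:ℝ)/2)) (g := fun _ => 1)
    (hL.pow_const _) aemeasurable_const
  simp only [Pi.mul_apply, mul_one, ENNReal.one_rpow, lintegral_one, measure_univ] at hH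
  have hrw : ∀ a, (L a ^ ((1:ℝ)/2)) ^ (2:ℝ) = L a := by
    intro a
    rw [← ENNReal.rpow_mul]
    norm_num
  simp only [hrw] at hH
  simpa using hH

/-- Per-coupling inequality. -/
lemma aux_coupling {d : ℕ} {δ : ℝ} (hδ : 0 < δ) (π : Measure (Euc d × Euc d))
    [IsProbabilityMeasure π] :
    ∫⁻ p, ENNReal.ofReal (Real.log (‖p.1 - p.2‖ / δ + 1)) ∂π ≤
      (∫⁻ p, ENNReal.ofReal (Real.log (‖p.1 - p.2‖ ^ 2 / δ ^ 2 + 1)) ∂π) ^ ((1:ℝ)/2)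
        + ∫⁻ p, ENNReal.ofReal (Real.log (‖p.1 - p.2‖ ^ 2 / δ ^ 2 + 1)) ∂π := by
  set L : Euc d × Euc d → ℝ≥0∞ :=
    fun p => ENNReal.ofReal (Real.log (‖p.1 - p.2‖ ^ 2 / δ ^ 2 + 1)) with hLdef
  have hLmeas : Measurable L := by
    apply ENNReal.measurable_ofReal.comp
    apply Real.measurable_log.comp
    fun_prop
  calc ∫⁻ p, ENNReal.ofReal (Real.log (‖p.1 - p.2‖ / δ + 1)) ∂π
      ≤ ∫⁻ p, ((L p) ^ ((1:ℝ)/2) + L p) ∂π := by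
        apply lintegral_mono
        intro p
        exact aux_pointwise hδ _ (norm_nonneg _)
    _ = (∫⁻ p, (L p) ^ ((1:ℝ)/2) ∂π) + ∫⁻ p, L p ∂π :=
        lintegral_add_left (hLmeas.pow_const _) _
    _ ≤ (∫⁻ p, L p ∂π) ^ ((1:ℝ)/2) + ∫⁻ p, L p ∂π :=
        add_le_add_left (aux_CS π hLmeas.aemeasurable) _

/-- For probability measures `μ, ν ∈ P_log(ℝ^d)` and `δ > 0`,
`D_δ(μ,ν) ≤ (D̃_δ(μ,ν)/log 2)^{1/2} + D̃_δ(μ,ν)`. -/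
theorem KR_le_sqrt_KRt_add_KRt (d : ℕ) (hd : 1 ≤ d) (δ : ℝ) (hδ : 0 < δ)
    (μ ν : Measure (Euc d)) (hμp : IsProbabilityMeasure μ) (hνp : IsProbabilityMeasure ν)
    (hμ : Plog μ) (hν : Plog ν) :
    KR d δ μ ν ≤ (KRt d δ μ ν / ENNReal.ofReal (Real.log 2)) ^ ((1 : ℝ) / 2)
      + KRt d δ μ ν := by
  by_cases htop : KRt d δ μ ν = ⊤
  · rw [htop, add_top]; exact le_top
  set c : ℝ≥0∞ := ENNReal.ofReal (Real.log 2) with hc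
  have hc0 : c ≠ 0 := by
    rw [hc, ne_eq, ENNReal.ofReal_eq_zero, not_le]
    exact Real.log_pos (by norm_num)
  have hctop : c ≠ ⊤ := ENNReal.ofReal_ne_top
  have hc1 : c ≤ 1 := by
    rw [hc]
    refine ENNReal.ofReal_le_one.mpr ?_
    have := Real.log_le_sub_one_of_pos (by norm_num : (0:ℝ) < 2)
    linarith
  set B : Measure (Euc d × Euc d) → ℝ≥0∞ :=
    fun π => ∫⁻ p, ENNReal.ofReal (Real.log (‖p.1 - p.2‖ ^ 2 / δ ^ 2 + 1)) ∂π with hB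
  set S : Set ℝ≥0∞ := B '' couplings μ ν with hS
  have hKRt : KRt d δ μ ν = sInf S := by
    rw [hS, sInf_image]; rfl
  have hSne : S.Nonempty := by
    by_contra hemp
    rw [Set.not_nonempty_iff_eq_empty] at hemp
    rw [hKRt, hemp, sInf_empty] at htop
    exact htop rfl
  obtain ⟨u, -, hu_tendsto, hu_mem⟩ := exists_seq_tendsto_sInf hSne (OrderBot.bddBelow S)
  have key : ∀ n, KR d δ μ ν ≤ (u n / c) ^ ((1:ℝ)/2) + u n := by
    intro n
    obtain ⟨π, hπ, hπB⟩ := hu_mem n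
    haveI : IsProbabilityMeasure π := hπ.1
    have h1 : KR d δ μ ν ≤ ∫⁻ p, ENNReal.ofReal (Real.log (‖p.1 - p.2‖ / δ + 1)) ∂π :=
      iInf₂_le π hπ
    have h2 := aux_coupling (d := d) hδ π
    have h3 : B π ≤ B π / c := by
      rw [ENNReal.le_div_iff_mul_le (Or.inl hc0) (Or.inl hctop)]
      exact mul_le_of_le_one_right' hc1
    have h4 : (B π) ^ ((1:ℝ)/2) ≤ (B π / c) ^ ((1:ℝ)/2) :=
      ENNReal.rpow_le_rpow h3 (by norm_num)
    rw [← hπB]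
    calc KR d δ μ ν ≤ _ := h1
      _ ≤ (B π) ^ ((1:ℝ)/2) + B π := h2
      _ ≤ (B π / c) ^ ((1:ℝ)/2) + B π := add_le_add_left h4 _
  have hφcont : Continuous (fun x : ℝ≥0∞ => (x / c) ^ ((1:ℝ)/2) + x) := by
    apply Continuous.add _ continuous_id
    exact ENNReal.continuous_rpow_const.comp (ENNReal.continuous_div_const c hc0)
  have htend : Tendsto (fun n => (u n / c) ^ ((1:ℝ)/2) + u n) atTop
      (𝓝 ((sInf S / c) ^ ((1:ℝ)/2) + sInf S)) :=
    (hφcont.tendsto _).comp hu_tendsto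
  have := ge_of_tendsto htend (Eventually.of_forall key)
  rwa [← hKRt] at this

end
end

section
/- Let d ≥ 1 and let μ, ν be Borel probability measures on ℝ^d belonging to P_log(ℝ^d). If lim_{δ → 0⁺} D̃_δ(μ,ν) / |log δ| = 0, then μ = ν. -/
open MeasureTheory ENNReal Filter Set Metric
open scoped Topology

noncomputable section

/-- Main coupling extraction: for every `e > 0` there is a coupling putting mass at most
`e` on pairs at distance `≥ e`. -/
lemma exists_coupling_small (d : ℕ) (μ ν : Measure (Euc d))
    (hμp : IsProbabilityMeasure μ) (hνp : IsProbabilityMeasure ν)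
    (h : Tendsto (fun δ : ℝ => KRt d δ μ ν / ENNReal.ofReal |Real.log δ|)
      (𝓝[>] (0 : ℝ)) (𝓝 0)) (e : ℝ) (he : 0 < e) :
    ∃ π ∈ couplings μ ν,
      π {p : Euc d × Euc d | e ≤ dist p.1 p.2} ≤ ENNReal.ofReal e := by
  -- pick δ ∈ (0, min (e^2) 1) with the KRt bound
  have hc : (0 : ℝ≥0∞) < ENNReal.ofReal e := ENNReal.ofReal_pos.mpr he
  have h1 : ∀ᶠ δ in 𝓝[>] (0:ℝ),
      KRt d δ μ ν / ENNReal.ofReal |Real.log δ| < ENNReal.ofReal e :=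
    h.eventually_lt_const hc
  have hr : (0:ℝ) < min (e^2) 1 := lt_min (by positivity) one_pos
  have h2 : Ioo (0:ℝ) (min (e^2) 1) ∈ 𝓝[>] (0:ℝ) :=
    Ioo_mem_nhdsGT_of_mem ⟨le_refl _, hr⟩
  obtain ⟨δ, hδlt, hδmem⟩ := (h1.and (eventually_of_mem h2 (fun _ h => h))).exists
  obtain ⟨hδ0, hδr⟩ := hδmem
  have hδ1 : δ < 1 := lt_of_lt_of_le hδr (min_le_right _ _)
  have hδe2 : δ < e^2 := lt_of_lt_of_le hδr (min_le_left _ _)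
  -- the two logarithmic constants
  set Lδ : ℝ≥0∞ := ENNReal.ofReal |Real.log δ| with hLδ
  have hlogδ : Real.log δ < 0 := Real.log_neg hδ0 hδ1
  have habs : |Real.log δ| = -Real.log δ := abs_of_neg hlogδ
  have hLδ0 : Lδ ≠ 0 := by
    simp only [hLδ, ne_eq, ENNReal.ofReal_eq_zero, not_le, habs]; linarith
  have hLδt : Lδ ≠ ⊤ := ENNReal.ofReal_ne_top
  set L : ℝ≥0∞ := ENNReal.ofReal (Real.log (e^2 / δ^2 + 1)) with hL
  -- Lδ ≤ L
  have hLδL : Lδ ≤ L := by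
    apply ENNReal.ofReal_le_ofReal
    rw [habs]
    have h1 : Real.log (e^2/δ^2) ≤ Real.log (e^2/δ^2 + 1) :=
      Real.log_le_log (by positivity) (by linarith)
    have h2 : Real.log (e^2/δ^2) = 2 * Real.log e - 2 * Real.log δ := by
      rw [Real.log_div (by positivity) (by positivity), Real.log_pow, Real.log_pow]
      push_cast; ring
    have h3 : Real.log δ ≤ 2 * Real.log e := by
      have := Real.log_le_log hδ0 hδe2.le
      rwa [Real.log_pow] at this; 
    nlinarith [h1, h2, h3]
  have hL0 : L ≠ 0 := fun h0 => hLδ0 (le_antisymm (h0 ▸ hLδL) zero_le)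
  have hLt : L ≠ ⊤ := ENNReal.ofReal_ne_top
  -- get a near-optimal coupling
  have hKRt : KRt d δ μ ν < ENNReal.ofReal e * Lδ :=
    (ENNReal.div_lt_iff (Or.inl hLδ0) (Or.inl hLδt)).mp hδlt
  rw [KRt] at hKRt
  rw [iInf_lt_iff] at hKRt
  obtain ⟨π, hπlt⟩ := hKRt
  rw [iInf_lt_iff] at hπlt
  obtain ⟨hπ, hπlt⟩ := hπlt
  refine ⟨π, hπ, ?_⟩
  -- Markov inequality
  set f : Euc d × Euc d → ℝ≥0∞ :=
    fun p => ENNReal.ofReal (Real.log (‖p.1 - p.2‖ ^ 2 / δ ^ 2 + 1)) with hf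
  have hfm : Measurable f := by
    apply ENNReal.measurable_ofReal.comp
    apply Real.measurable_log.comp
    exact (((measurable_fst.sub measurable_snd).norm.pow measurable_const).div_const _).add_const _
  have hsub : {p : Euc d × Euc d | e ≤ dist p.1 p.2} ⊆ {p | L ≤ f p} := by
    intro p hp
    simp only [mem_setOf_eq] at hp ⊢
    apply ENNReal.ofReal_le_ofReal
    apply Real.log_le_log (by positivity)
    have : e ≤ ‖p.1 - p.2‖ := by rwa [dist_eq_norm] at hp
    have h2 : e^2 ≤ ‖p.1 - p.2‖^2 := by nlinarith [norm_nonneg (p.1 - p.2)]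
    have : e^2/δ^2 ≤ ‖p.1 - p.2‖^2/δ^2 := by
      apply div_le_div_of_nonneg_right h2 (by positivity) |>.trans_eq rfl
    linarith
  have hmarkov : L * π {p | L ≤ f p} ≤ ∫⁻ p, f p ∂π :=
    mul_meas_ge_le_lintegral₀ hfm.aemeasurable L
  have hchain : L * π {p : Euc d × Euc d | e ≤ dist p.1 p.2} < L * ENNReal.ofReal e := by
    calc L * π {p : Euc d × Euc d | e ≤ dist p.1 p.2}
        ≤ L * π {p | L ≤ f p} := mul_le_mul_right (measure_mono hsub) L
      _ ≤ ∫⁻ p, f p ∂π := hmarkov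
      _ < ENNReal.ofReal e * Lδ := hπlt
      _ ≤ ENNReal.ofReal e * L := mul_le_mul_right hLδL _
      _ = L * ENNReal.ofReal e := mul_comm _ _
  exact ((ENNReal.mul_lt_mul_iff_right hL0 hLt).mp hchain).le

lemma couplings_nonempty {d : ℕ} (μ ν : Measure (Euc d))
    (hμp : IsProbabilityMeasure μ) (hνp : IsProbabilityMeasure ν) :
    μ.prod ν ∈ couplings μ ν := by
  refine ⟨by infer_instance, ?_, ?_⟩
  · rw [Measure.map_fst_prod]; simp
  · rw [Measure.map_snd_prod]; simp


/-- If `D̃_δ(μ,ν)/|log δ| → 0` as `δ → 0⁺`, then `μ = ν`. -/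
theorem eq_of_KRt_div_log_tendsto_zero (d : ℕ) (hd : 1 ≤ d)
    (μ ν : Measure (Euc d)) (hμp : IsProbabilityMeasure μ) (hνp : IsProbabilityMeasure ν)
    (hμ : Plog μ) (hν : Plog ν)
    (h : Tendsto (fun δ : ℝ => KRt d δ μ ν / ENNReal.ofReal |Real.log δ|)
      (𝓝[>] (0 : ℝ)) (𝓝 0)) :
    μ = ν := by
  have hLP : levyProkhorovEDist μ ν = 0 := by
    refine le_antisymm ?_ zero_le
    apply levyProkhorovEDist_le_of_forall_le μ ν 0
    intro ε B hε0 hεt hB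
    set e : ℝ := ε.toReal with he
    have he0 : 0 < e := ENNReal.toReal_pos hε0.ne' hεt.ne
    obtain ⟨π, ⟨hπp, hπ1, hπ2⟩, hπsmall⟩ :=
      exists_coupling_small d μ ν hμp hνp h e he0
    have hofe : ENNReal.ofReal e = ε := ENNReal.ofReal_toReal hεt.ne
    have hμB : μ B = π (Prod.fst ⁻¹' B) := by
      rw [← hπ1, Measure.map_apply measurable_fst hB]
    have hνT : ν (thickening e B) = π (Prod.snd ⁻¹' thickening e B) := by
      rw [← hπ2, Measure.map_apply measurable_snd isOpen_thickening.measurableSet]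
    have hsubset : (Prod.fst ⁻¹' B : Set (Euc d × Euc d)) ⊆
        (Prod.snd ⁻¹' thickening e B) ∪ {p | e ≤ dist p.1 p.2} := by
      intro p hp
      by_cases hd2 : e ≤ dist p.1 p.2
      · exact Or.inr hd2
      · left
        rw [mem_preimage, mem_thickening_iff]
        exact ⟨p.1, hp, by rw [dist_comm]; linarith [not_le.mp hd2]⟩
    calc μ B = π (Prod.fst ⁻¹' B) := hμB
      _ ≤ π ((Prod.snd ⁻¹' thickening e B) ∪ {p | e ≤ dist p.1 p.2}) :=
          measure_mono hsubset
      _ ≤ π (Prod.snd ⁻¹' thickening e B) + π {p | e ≤ dist p.1 p.2} :=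
          measure_union_le _ _
      _ ≤ ν (thickening e B) + ε := by
          rw [← hνT] at *; exact add_le_add_right (hπsmall.trans_eq hofe) _
  refine ext_of_generate_finite {s : Set (Euc d) | IsClosed s}
    ?_ isPiSystem_isClosed ?_ (by simp)
  · rw [BorelSpace.measurable_eq (α := Euc d), borel_eq_generateFrom_isClosed]
  · intro A hA
    exact measure_eq_measure_of_levyProkhorovEDist_eq_zero_of_isClosed hLP hA
      ⟨1, one_pos, measure_ne_top _ _⟩ ⟨1, one_pos, measure_ne_top _ _⟩

end
end

section
/- Let d ≥ 1, let μ and (μ_k)_{k≥1} be Borel probability measures on ℝ^d belonging to P_log(ℝ^d), and suppose there exist a sequence δ_k > 0 with δ_k → 0 as k → ∞ and a constant M < ∞ such that D̃_{δ_k}(μ_k, μ) ≤ M for all k. Then μ_k converges weakly to μ as k → ∞ (i.e., ∫ f dμ_k → ∫ f dμ for every bounded continuous f : ℝ^d → ℝ). -/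
open MeasureTheory ENNReal Filter
open scoped Topology

noncomputable section

/-- Extraction of a near-optimal coupling. -/
lemma exists_coupling_cost_le {d : ℕ} {δ : ℝ} {μ ν : Measure (Euc d)} {M : ℝ≥0∞}
    (hM : M < ⊤) (h : KRt d δ μ ν ≤ M) :
    ∃ π ∈ couplings μ ν,
      ∫⁻ p, ENNReal.ofReal (Real.log (‖p.1 - p.2‖ ^ 2 / δ ^ 2 + 1)) ∂π ≤ M + 1 := by
  have h2 : KRt d δ μ ν < M + 1 := lt_of_le_of_lt h (ENNReal.lt_add_right hM.ne one_ne_zero)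
  rw [KRt, iInf_lt_iff] at h2
  obtain ⟨π, hπ⟩ := h2
  rw [iInf_lt_iff] at hπ
  obtain ⟨hmem, hlt⟩ := hπ
  exact ⟨π, hmem, hlt.le⟩

/-- Chebyshev bound: a coupling with small logarithmic cost puts small mass far from
the diagonal. -/
lemma coupling_meas_far_le {d : ℕ} {δ : ℝ} (hδ : 0 < δ) {η : ℝ} (hη : 0 < η)
    (π : Measure (Euc d × Euc d)) {C : ℝ≥0∞}
    (h : ∫⁻ p, ENNReal.ofReal (Real.log (‖p.1 - p.2‖ ^ 2 / δ ^ 2 + 1)) ∂π ≤ C) :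
    π {p | η ≤ dist p.1 p.2} ≤ C / ENNReal.ofReal (Real.log (η ^ 2 / δ ^ 2 + 1)) := by
  set c := ENNReal.ofReal (Real.log (η ^ 2 / δ ^ 2 + 1)) with hc
  have hcpos : 0 < c := by
    rw [hc]
    apply ENNReal.ofReal_pos.mpr
    apply Real.log_pos
    have : 0 < η ^ 2 / δ ^ 2 := by positivity
    linarith
  have hmeas : Measurable fun p : Euc d × Euc d =>
      ENNReal.ofReal (Real.log (‖p.1 - p.2‖ ^ 2 / δ ^ 2 + 1)) := by
    apply Measurable.ennreal_ofReal
    apply Real.measurable_log.comp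
    exact ((((measurable_fst.sub measurable_snd).norm.pow_const 2).div_const _).add_const 1)
  have hsub : {p : Euc d × Euc d | η ≤ dist p.1 p.2} ⊆
      {p | c ≤ ENNReal.ofReal (Real.log (‖p.1 - p.2‖ ^ 2 / δ ^ 2 + 1))} := by
    intro p hp
    simp only [Set.mem_setOf_eq] at hp ⊢
    rw [dist_eq_norm] at hp
    apply ENNReal.ofReal_le_ofReal
    apply Real.log_le_log (by positivity)
    gcongr
  have h1 : c * π {p | η ≤ dist p.1 p.2} ≤ C := by
    calc c * π {p | η ≤ dist p.1 p.2}
        ≤ c * π {p | c ≤ ENNReal.ofReal (Real.log (‖p.1 - p.2‖ ^ 2 / δ ^ 2 + 1))} :=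
          mul_le_mul_right (measure_mono hsub) c
      _ ≤ _ := le_trans (mul_meas_ge_le_lintegral₀ hmeas.aemeasurable c) h
  rw [ENNReal.le_div_iff_mul_le (Or.inl hcpos.ne') (Or.inl ENNReal.ofReal_ne_top)]
  rwa [mul_comm]

/-- If `D̃_{δ_k}(μ_k, μ)` is uniformly bounded along a sequence `δ_k → 0`, then
`μ_k` converges weakly to `μ`. -/
theorem tendsto_integral_of_KRt_bounded (d : ℕ) (hd : 1 ≤ d)
    (μ : ℕ → Measure (Euc d)) (μlim : Measure (Euc d))
    (hμp : ∀ k, IsProbabilityMeasure (μ k)) (hμlimp : IsProbabilityMeasure μlim)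
    (hμ : ∀ k, Plog (μ k)) (hμlim : Plog μlim)
    (δ : ℕ → ℝ) (hδpos : ∀ k, 0 < δ k) (hδ : Tendsto δ atTop (𝓝 0))
    (M : ℝ≥0∞) (hM : M < ⊤) (hbound : ∀ k, KRt d (δ k) (μ k) μlim ≤ M) :
    ∀ f : Euc d → ℝ, Continuous f → (∃ B : ℝ, ∀ x, |f x| ≤ B) →
      Tendsto (fun k => ∫ x, f x ∂(μ k)) atTop (𝓝 (∫ x, f x ∂μlim)) := by
  set P : ℕ → ProbabilityMeasure (Euc d) := fun k => ⟨μ k, hμp k⟩ with hP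
  set Plim : ProbabilityMeasure (Euc d) := ⟨μlim, hμlimp⟩ with hPlim
  -- main portmanteau estimate, in `ℝ≥0∞`
  have main : ∀ G : Set (Euc d), IsOpen G →
      μlim G ≤ liminf (fun k => μ k G) atTop := by
    intro G hG
    -- write G as a monotone union of closed sets away from the complement
    have hmono : Monotone (fun n : ℕ => (Metric.thickening (1 / (n + 1 : ℝ)) Gᶜ)ᶜ) := by
      intro n m hnm
      apply Set.compl_subset_compl.mpr
      apply Metric.thickening_mono
      gcongr
    have hU : G = ⋃ n : ℕ, (Metric.thickening (1 / (n + 1 : ℝ)) Gᶜ)ᶜ := by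
      ext x
      simp only [Set.mem_iUnion, Set.mem_compl_iff, Metric.mem_thickening_iff]
      constructor
      · intro hx
        obtain ⟨ε, hε, hball⟩ := Metric.isOpen_iff.mp hG x hx
        obtain ⟨n, hn⟩ := exists_nat_one_div_lt hε
        refine ⟨n, fun ⟨y, hy, hd'⟩ => hy (hball ?_)⟩
        rw [Metric.mem_ball, dist_comm]
        calc dist x y < 1 / (n + 1) := hd'
          _ < ε := by exact_mod_cast hn
      · rintro ⟨n, hn⟩
        by_contra hx
        exact hn ⟨x, hx, by simp; positivity⟩
    have hsup : μlim G = ⨆ n : ℕ, μlim ((Metric.thickening (1 / (n + 1 : ℝ)) Gᶜ)ᶜ) := by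
      conv_lhs => rw [hU]
      exact hmono.directed_le.measure_iUnion
    rw [hsup]
    apply iSup_le
    intro n
    set η : ℝ := 1 / (n + 1 : ℝ) with hηdef
    have hη : 0 < η := by positivity
    set F : Set (Euc d) := (Metric.thickening η Gᶜ)ᶜ with hF
    have hFmeas : MeasurableSet F := Metric.isOpen_thickening.isClosed_compl.measurableSet
    -- the cost threshold tends to infinity
    have hct : Tendsto (fun k => ENNReal.ofReal (Real.log (η ^ 2 / (δ k) ^ 2 + 1)))
        atTop (𝓝 ⊤) := by
      apply ENNReal.tendsto_ofReal_atTop.comp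
      apply Real.tendsto_log_atTop.comp
      apply tendsto_atTop_add_const_right
      have h1 : Tendsto (fun k => (δ k) ^ 2) atTop (𝓝[>] 0) := by
        rw [tendsto_nhdsWithin_iff]
        exact ⟨by simpa using (hδ.pow 2),
          Filter.Eventually.of_forall fun k => pow_pos (hδpos k) 2⟩
      have h2 := h1.inv_tendsto_nhdsGT_zero.const_mul_atTop (show (0:ℝ) < η ^ 2 from pow_pos hη 2)
      simpa [div_eq_mul_inv] using h2
    -- hence the error term tends to 0
    have herr : Tendsto
        (fun k => (M + 1) / ENNReal.ofReal (Real.log (η ^ 2 / (δ k) ^ 2 + 1)))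
        atTop (𝓝 0) := by
      have hinv : Tendsto
          (fun k => (ENNReal.ofReal (Real.log (η ^ 2 / (δ k) ^ 2 + 1)))⁻¹)
          atTop (𝓝 0) := by
        simpa using hct.inv
      have := ENNReal.Tendsto.const_mul hinv
        (Or.inr (by simp [hM.ne] : (M + 1 : ℝ≥0∞) ≠ ⊤))
      simpa [div_eq_mul_inv] using this
    apply ENNReal.le_of_forall_pos_le_add
    intro ε hε _
    have hev : ∀ᶠ k in atTop,
        (M + 1) / ENNReal.ofReal (Real.log (η ^ 2 / (δ k) ^ 2 + 1)) < (ε : ℝ≥0∞) :=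
      herr.eventually (gt_mem_nhds (by exact_mod_cast hε))
    have hkey : ∀ᶠ k in atTop, μlim F ≤ μ k G + (ε : ℝ≥0∞) := by
      filter_upwards [hev] with k hk
      obtain ⟨π, ⟨hπp, hπ1, hπ2⟩, hπcost⟩ := exists_coupling_cost_le hM (hbound k)
      have cheb := coupling_meas_far_le (hδpos k) hη π hπcost
      have hincl : {p : Euc d × Euc d | p.2 ∈ F} ⊆
          (Prod.fst ⁻¹' G) ∪ {p | η ≤ dist p.1 p.2} := by
        intro p hp
        simp only [hF, Set.mem_setOf_eq, Set.mem_compl_iff, Metric.mem_thickening_iff] at hp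
        by_cases h : η ≤ dist p.1 p.2
        · exact Or.inr h
        · left
          by_contra hxG
          exact hp ⟨p.1, hxG, by rw [dist_comm]; linarith [lt_of_not_ge h]⟩
      calc μlim F = π (Prod.snd ⁻¹' F) := by
            rw [← hπ2, Measure.map_apply measurable_snd hFmeas]
        _ ≤ π ((Prod.fst ⁻¹' G) ∪ {p | η ≤ dist p.1 p.2}) := measure_mono hincl
        _ ≤ π (Prod.fst ⁻¹' G) + π {p | η ≤ dist p.1 p.2} := measure_union_le _ _
        _ = μ k G + π {p | η ≤ dist p.1 p.2} := by
            rw [← hπ1, Measure.map_apply measurable_fst hG.measurableSet]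
        _ ≤ μ k G + (ε : ℝ≥0∞) := add_le_add_right (cheb.trans hk.le) _
    have h2 : μlim F - (ε : ℝ≥0∞) ≤ liminf (fun k => μ k G) atTop := by
      refine le_liminf_of_le (by isBoundedDefault) ?_
      filter_upwards [hkey] with k hk
      exact tsub_le_iff_right.mpr hk
    calc μlim F ≤ (μlim F - (ε : ℝ≥0∞)) + ε := le_tsub_add
      _ ≤ liminf (fun k => μ k G) atTop + ε := add_le_add_left h2 _
  -- convert to the `ProbabilityMeasure` weak-convergence statement
  have key : Tendsto P atTop (𝓝 Plim) := by
    apply MeasureTheory.tendsto_of_forall_isOpen_le_liminf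
    intro G hG
    have aux : ENNReal.ofNNReal (liminf (fun k => P k G) atTop) =
        liminf (fun k => ((P k G : NNReal) : ℝ≥0∞)) atTop := by
      refine Monotone.map_liminf_of_continuousAt (F := atTop) ENNReal.coe_mono
        (fun k => P k G) ENNReal.continuous_coe.continuousAt ?_ ?_
      · exact Filter.IsBoundedUnder.isCoboundedUnder_ge ⟨1, by
          simp [eventually_map, ProbabilityMeasure.apply_le_one]⟩
      · exact ⟨0, by simp⟩
    rw [← ENNReal.coe_le_coe, aux]
    have hc : ∀ k, ((P k G : NNReal) : ℝ≥0∞) = μ k G := fun k =>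
      ProbabilityMeasure.ennreal_coeFn_eq_coeFn_toMeasure _ _
    have hclim : ((Plim G : NNReal) : ℝ≥0∞) = μlim G :=
      ProbabilityMeasure.ennreal_coeFn_eq_coeFn_toMeasure _ _
    rw [hclim]
    calc μlim G ≤ liminf (fun k => μ k G) atTop := main G hG
      _ = liminf (fun k => ((P k G : NNReal) : ℝ≥0∞)) atTop := by
          exact (liminf_congr (Filter.Eventually.of_forall fun k => (hc k).symm))
  intro f hfc hfb
  obtain ⟨B, hB⟩ := hfb
  let fb : BoundedContinuousFunction (Euc d) ℝ :=
    BoundedContinuousFunction.ofNormedAddCommGroup f hfc B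
      (fun x => by rw [Real.norm_eq_abs]; exact hB x)
  have := ProbabilityMeasure.tendsto_iff_forall_integral_tendsto.mp key fb
  exact this

end
end

section
/- Let d ≥ 1. There exists a constant C_d > 0, depending only on d, such that for every continuously differentiable function φ : ℝ^d → ℝ whose gradient is locally integrable, and for all x, y ∈ ℝ^d, |φ(x) − φ(y)| ≤ C_d |x − y| ( M|∇φ|(x) + M|∇φ|(y) ), where M denotes the Hardy–Littlewood maximal operator. -/
open MeasureTheory ENNReal Filter
open scoped Topology

noncomputable section

/-- Hardy–Littlewood maximal function
`Mψ(x) = sup_{r>0} |B(r)|⁻¹ ∫_{B(r)} |ψ(x+y)| dy`. -/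
def maximalFn (d : ℕ) (ψ : Euc d → ℝ) (x : Euc d) : ℝ≥0∞ :=
  ⨆ (r : ℝ) (_ : 0 < r),
    (volume (Metric.ball (0 : Euc d) r))⁻¹ *
      ∫⁻ y in Metric.ball (0 : Euc d) r, ENNReal.ofReal |ψ (x + y)|

section Aux

open Metric Set


lemma ftc_seg {d : ℕ} {φ : Euc d → ℝ} (hφ : ContDiff ℝ 1 φ) (v z : Euc d) :
    |φ v - φ z| ≤ ∫ t in (0:ℝ)..1, ‖fderiv ℝ φ (v + t • (z - v))‖ * ‖z - v‖ := by
  set γ : ℝ → Euc d := fun t => v + t • (z - v) with hγdef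
  have hγc : Continuous γ := by fun_prop
  have hγ : ∀ t : ℝ, HasDerivAt γ (z - v) t := by
    intro t
    have := ((hasDerivAt_id t).smul_const (z - v)).const_add v
    simpa [hγdef] using this
  have hfc : Continuous (fderiv ℝ φ) := hφ.continuous_fderiv one_ne_zero
  have hD : ∀ t : ℝ, HasDerivAt (fun s => φ (γ s)) ((fderiv ℝ φ (γ t)) (z - v)) t := by
    intro t
    exact (((hφ.differentiable one_ne_zero) (γ t)).hasFDerivAt).comp_hasDerivAt t (hγ t)
  have hcont : Continuous fun t => (fderiv ℝ φ (γ t)) (z - v) :=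
    (hfc.comp hγc).clm_apply continuous_const
  have heq : φ z - φ v = ∫ t in (0:ℝ)..1, (fderiv ℝ φ (γ t)) (z - v) := by
    have := intervalIntegral.integral_eq_sub_of_hasDerivAt
      (f := fun s => φ (γ s)) (a := (0:ℝ)) (b := 1)
      (fun t _ => hD t) (hcont.intervalIntegrable 0 1)
    have h0 : γ 0 = v := by simp [hγdef]
    have h1 : γ 1 = z := by simp [hγdef]
    simp only [this, h0, h1]
  have h2 : |φ v - φ z| ≤ ∫ t in (0:ℝ)..1, ‖(fderiv ℝ φ (γ t)) (z - v)‖ := by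
    rw [abs_sub_comm, ← Real.norm_eq_abs, heq]
    exact intervalIntegral.norm_integral_le_integral_norm zero_le_one
  refine h2.trans ?_
  apply intervalIntegral.integral_mono_on zero_le_one
  · exact (hcont.norm).intervalIntegrable 0 1 |>.mono_set (by rw [Set.uIcc_of_le zero_le_one])
  · exact (((hfc.comp hγc).norm).mul continuous_const).intervalIntegrable 0 1 |>.mono_set
      (by rw [Set.uIcc_of_le zero_le_one])
  · intro t _
    exact (fderiv ℝ φ (γ t)).le_opNorm _

lemma pointwise_bound {d : ℕ} {φ : Euc d → ℝ} (hφ : ContDiff ℝ 1 φ) (v z : Euc d) :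
    ENNReal.ofReal |φ v - φ z| ≤ ENNReal.ofReal ‖z - v‖ *
      ∫⁻ t in Ioc (0:ℝ) 1, ENNReal.ofReal ‖fderiv ℝ φ (v + t • (z - v))‖ := by
  have hfc : Continuous (fderiv ℝ φ) := hφ.continuous_fderiv one_ne_zero
  have hγc : Continuous fun t : ℝ => v + t • (z - v) := by fun_prop
  have hc : Continuous fun t : ℝ => ‖fderiv ℝ φ (v + t • (z - v))‖ := (hfc.comp hγc).norm
  have h1 := ftc_seg hφ v z
  have h2 : (∫ t in (0:ℝ)..1, ‖fderiv ℝ φ (v + t • (z - v))‖ * ‖z - v‖)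
      = ∫ t in Ioc (0:ℝ) 1, ‖fderiv ℝ φ (v + t • (z - v))‖ * ‖z - v‖ :=
    intervalIntegral.integral_of_le zero_le_one
  have h3 : ENNReal.ofReal (∫ t in Ioc (0:ℝ) 1, ‖fderiv ℝ φ (v + t • (z - v))‖ * ‖z - v‖)
      = ∫⁻ t in Ioc (0:ℝ) 1, ENNReal.ofReal (‖fderiv ℝ φ (v + t • (z - v))‖ * ‖z - v‖) := by
    apply ofReal_integral_eq_lintegral_ofReal
    · exact ((hc.mul continuous_const)).integrableOn_Ioc
    · exact Filter.Eventually.of_forall fun t => by positivity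
  calc ENNReal.ofReal |φ v - φ z|
      ≤ ENNReal.ofReal (∫ t in Ioc (0:ℝ) 1, ‖fderiv ℝ φ (v + t • (z - v))‖ * ‖z - v‖) := by
        rw [← h2]; exact ENNReal.ofReal_le_ofReal h1
    _ = ∫⁻ t in Ioc (0:ℝ) 1, ENNReal.ofReal (‖fderiv ℝ φ (v + t • (z - v))‖ * ‖z - v‖) := h3
    _ = ENNReal.ofReal ‖z - v‖ *
        ∫⁻ t in Ioc (0:ℝ) 1, ENNReal.ofReal ‖fderiv ℝ φ (v + t • (z - v))‖ := by
        rw [← lintegral_const_mul' _ _ ofReal_ne_top]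
        congr 1; ext t
        rw [← ENNReal.ofReal_mul (norm_nonneg _), mul_comm]

lemma lint_le_maximal {d : ℕ} (ψ : Euc d → ℝ) (v : Euc d) {s : ℝ} (hs : 0 < s) :
    ∫⁻ y in ball (0 : Euc d) s, ENNReal.ofReal |ψ (v + y)|
      ≤ volume (ball (0 : Euc d) s) * maximalFn d ψ v := by
  have h0 : volume (ball (0 : Euc d) s) ≠ 0 := (measure_ball_pos volume 0 hs).ne'
  have ht : volume (ball (0 : Euc d) s) ≠ ⊤ := measure_ball_lt_top.ne
  have hle : (volume (ball (0 : Euc d) s))⁻¹ *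
      ∫⁻ y in ball (0 : Euc d) s, ENNReal.ofReal |ψ (v + y)| ≤ maximalFn d ψ v := by
    have := le_iSup (fun r : ℝ => ⨆ _ : 0 < r, (volume (ball (0 : Euc d) r))⁻¹ *
      ∫⁻ y in ball (0 : Euc d) r, ENNReal.ofReal |ψ (v + y)|) s
    refine le_trans ?_ this
    exact le_iSup (fun _ : 0 < s => (volume (ball (0 : Euc d) s))⁻¹ *
      ∫⁻ y in ball (0 : Euc d) s, ENNReal.ofReal |ψ (v + y)|) hs
  calc ∫⁻ y in ball (0 : Euc d) s, ENNReal.ofReal |ψ (v + y)|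
      = volume (ball (0 : Euc d) s) * ((volume (ball (0 : Euc d) s))⁻¹ *
        ∫⁻ y in ball (0 : Euc d) s, ENNReal.ofReal |ψ (v + y)|) := by
        rw [← mul_assoc, ENNReal.mul_inv_cancel h0 ht, one_mul]
    _ ≤ _ := mul_le_mul_right hle _

-- translation: ∫⁻ in ball p s, g = ∫⁻ y in ball (p-v) s, g (v+y)
lemma lint_translate {d : ℕ} (g : Euc d → ℝ≥0∞) (v p : Euc d) (s : ℝ) :
    ∫⁻ y in ball (p - v) s, g (v + y) = ∫⁻ u in ball p s, g u := by
  have hmp : MeasurePreserving (fun y : Euc d => v + y) volume volume :=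
    measurePreserving_add_left volume v
  have hemb : MeasurableEmbedding (fun y : Euc d => v + y) :=
    (Homeomorph.addLeft v).measurableEmbedding
  have hpre : ball (p - v) s = (fun y : Euc d => v + y) ⁻¹' ball p s := by
    ext y
    simp only [Set.mem_preimage, mem_ball, dist_eq_norm]
    constructor <;> intro h <;> · convert h using 2; abel
  rw [hpre, hmp.setLIntegral_comp_preimage_emb hemb g (ball p s)]

-- scaling step
lemma lint_scaled {d : ℕ} (hd : 1 ≤ d) {φ : Euc d → ℝ} (hφ : ContDiff ℝ 1 φ)
    (v x : Euc d) {r t : ℝ} (hr : 0 < r) (hvx : ‖x - v‖ ≤ r) (ht : t ∈ Ioc (0:ℝ) 1) :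
    ∫⁻ z in ball x r, ENNReal.ofReal ‖fderiv ℝ φ (v + t • (z - v))‖
      ≤ ENNReal.ofReal (2 ^ d) * volume (ball (0 : Euc d) r) *
        maximalFn d (fun u => ‖fderiv ℝ φ u‖) v := by
  obtain ⟨ht0, ht1⟩ := ht
  set g : Euc d → ℝ≥0∞ := fun u => ENNReal.ofReal ‖fderiv ℝ φ u‖ with hg
  set c : ℝ≥0∞ := ENNReal.ofReal |(t ^ d)⁻¹| with hc
  set T : Euc d → Euc d := fun z => (v - t • v) + t • z with hT
  have hfin : Module.finrank ℝ (Euc d) = d := finrank_euclideanSpace_fin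
  -- T is measure preserving onto c • volume
  have h1 : MeasurePreserving (fun z : Euc d => t • z) volume (c • volume) := by
    refine ⟨measurable_const_smul t, ?_⟩
    rw [Measure.map_addHaar_smul volume ht0.ne', hfin, hc]
  have h2 : MeasurePreserving (fun u : Euc d => (v - t • v) + u) (c • volume) (c • volume) := by
    refine ⟨measurable_const_add _, ?_⟩
    rw [Measure.map_smul, (measurePreserving_add_left volume (v - t • v)).map_eq]
  have hmp : MeasurePreserving T volume (c • volume) := by
    have := h2.comp h1
    convert this using 1
    rfl
  have hemb : MeasurableEmbedding T := by
    have e1 : MeasurableEmbedding (fun z : Euc d => t • z) :=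
      (Homeomorph.smulOfNeZero t ht0.ne').measurableEmbedding
    have e2 : MeasurableEmbedding (fun u : Euc d => (v - t • v) + u) :=
      (Homeomorph.addLeft (v - t • v)).measurableEmbedding
    exact e2.comp e1
  have hdist : ∀ a b : Euc d, dist (T a) (T b) = t * dist a b := by
    intro a b
    simp only [hT, dist_eq_norm]
    rw [show (v - t • v + t • a) - (v - t • v + t • b) = t • (a - b) by module,
      norm_smul, Real.norm_eq_abs, abs_of_pos ht0]
  have himg : T '' ball x r = ball (T x) (t * r) := by
    ext u
    constructor
    · rintro ⟨z, hz, rfl⟩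
      rw [mem_ball, hdist]
      exact mul_lt_mul_of_pos_left (mem_ball.mp hz) ht0
    · intro hu
      refine ⟨x + t⁻¹ • (u - T x), ?_, ?_⟩
      · rw [mem_ball]
        have hTz : T (x + t⁻¹ • (u - T x)) = u := by
          simp only [hT, smul_add, smul_smul, mul_inv_cancel₀ ht0.ne', one_smul]
          module
        have := hdist (x + t⁻¹ • (u - T x)) x
        rw [hTz] at this
        have hlt : t * dist (x + t⁻¹ • (u - T x)) x < t * r := by
          rw [← this]; exact mem_ball.mp hu
        exact lt_of_mul_lt_mul_left hlt ht0.le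
      · simp only [hT, smul_add, smul_smul, mul_inv_cancel₀ ht0.ne', one_smul]
        module
  have hTz : (fun z : Euc d => ENNReal.ofReal ‖fderiv ℝ φ (v + t • (z - v))‖)
      = fun z => g (T z) := by
    funext z
    simp only [hg, hT]
    rw [show v + t • (z - v) = v - t • v + t • z by module]
  rw [show (∫⁻ z in ball x r, ENNReal.ofReal ‖fderiv ℝ φ (v + t • (z - v))‖)
      = ∫⁻ z in ball x r, g (T z) by rw [hTz]]
  calc ∫⁻ z in ball x r, g (T z)
      = ∫⁻ u in T '' ball x r, g u ∂(c • volume) := hmp.setLIntegral_comp_emb hemb g _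
    _ = c * ∫⁻ u in ball (T x) (t * r), g u := by
        rw [himg, Measure.restrict_smul, lintegral_smul_measure, smul_eq_mul]
    _ = c * ∫⁻ y in ball (T x - v) (t * r), g (v + y) := by rw [lint_translate g v (T x) (t*r)]
    _ ≤ c * ∫⁻ y in ball (0 : Euc d) (2 * (t * r)), g (v + y) := by
        gcongr
        intro u hu
        simp only [mem_ball, dist_eq_norm] at hu ⊢
        have hTx : ‖T x - v‖ ≤ t * r := by
          have h5 : T x - v = t • (x - v) := by simp only [hT]; module
          rw [h5, norm_smul, Real.norm_eq_abs, abs_of_pos ht0]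
          exact mul_le_mul_of_nonneg_left hvx ht0.le
        calc ‖u - 0‖ = ‖(u - (T x - v)) + (T x - v)‖ := by congr 1; abel
          _ ≤ ‖u - (T x - v)‖ + ‖T x - v‖ := norm_add_le _ _
          _ < t * r + t * r := by exact add_lt_add_of_lt_of_le hu hTx
          _ = 2 * (t * r) := by ring
    _ ≤ c * (volume (ball (0 : Euc d) (2 * (t * r))) *
          maximalFn d (fun u => ‖fderiv ℝ φ u‖) v) := by
        gcongr
        have := lint_le_maximal (fun u => ‖fderiv ℝ φ u‖) v
          (s := 2 * (t * r)) (by positivity)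
        simpa only [abs_norm] using this
    _ = c * ENNReal.ofReal ((2 * t) ^ d) * volume (ball (0 : Euc d) r) *
          maximalFn d (fun u => ‖fderiv ℝ φ u‖) v := by
        rw [show (2 : ℝ) * (t * r) = (2 * t) * r by ring,
          Measure.addHaar_ball_mul_of_pos volume 0 (by positivity) r, hfin]
        ring
    _ ≤ ENNReal.ofReal (2 ^ d) * volume (ball (0 : Euc d) r) *
          maximalFn d (fun u => ‖fderiv ℝ φ u‖) v := by
        gcongr
        rw [hc, ← ENNReal.ofReal_mul (abs_nonneg _)]
        apply ENNReal.ofReal_le_ofReal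
        rw [abs_of_pos (by positivity : (0:ℝ) < (t ^ d)⁻¹), mul_pow]
        rw [inv_mul_eq_div, mul_div_assoc, div_self (by positivity : (t:ℝ)^d ≠ 0), mul_one]

lemma avg_bound {d : ℕ} (hd : 1 ≤ d) {φ : Euc d → ℝ} (hφ : ContDiff ℝ 1 φ)
    (v x : Euc d) {r : ℝ} (hr : 0 < r) (hvx : ‖x - v‖ ≤ r) :
    ∫⁻ z in ball x r, ENNReal.ofReal |φ v - φ z|
      ≤ ENNReal.ofReal (2 * r) * (ENNReal.ofReal (2 ^ d) * volume (ball (0 : Euc d) r) *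
          maximalFn d (fun u => ‖fderiv ℝ φ u‖) v) := by
  have hfc : Continuous (fderiv ℝ φ) := hφ.continuous_fderiv one_ne_zero
  set F : Euc d → ℝ → ℝ≥0∞ := fun z t => ENNReal.ofReal ‖fderiv ℝ φ (v + t • (z - v))‖ with hF
  have hFm : Measurable (Function.uncurry F) := by
    apply Continuous.measurable
    apply ENNReal.continuous_ofReal.comp
    apply Continuous.norm
    apply hfc.comp
    fun_prop
  have hImeas : Measurable fun z => ∫⁻ t in Ioc (0:ℝ) 1, F z t := by
    exact Measurable.lintegral_prod_right hFm
  have step1 : ∫⁻ z in ball x r, ENNReal.ofReal |φ v - φ z|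
      ≤ ∫⁻ z in ball x r, ENNReal.ofReal (2 * r) * ∫⁻ t in Ioc (0:ℝ) 1, F z t := by
    apply setLIntegral_mono (by exact (measurable_const.mul hImeas))
    intro z hz
    refine (pointwise_bound hφ v z).trans ?_
    apply mul_le_mul_left
    apply ENNReal.ofReal_le_ofReal
    calc ‖z - v‖ = ‖(z - x) + (x - v)‖ := by congr 1; abel
      _ ≤ ‖z - x‖ + ‖x - v‖ := norm_add_le _ _
      _ ≤ r + r := add_le_add (by simpa [dist_eq_norm] using (mem_ball.mp hz).le) hvx
      _ = 2 * r := by ring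
  have step2 : ∫⁻ z in ball x r, ENNReal.ofReal (2 * r) * ∫⁻ t in Ioc (0:ℝ) 1, F z t
      = ENNReal.ofReal (2 * r) * ∫⁻ z in ball x r, ∫⁻ t in Ioc (0:ℝ) 1, F z t :=
    lintegral_const_mul' _ _ ofReal_ne_top
  have step3 : ∫⁻ z in ball x r, ∫⁻ t in Ioc (0:ℝ) 1, F z t
      = ∫⁻ t in Ioc (0:ℝ) 1, ∫⁻ z in ball x r, F z t := by
    apply lintegral_lintegral_swap
    exact hFm.aemeasurable
  have step4 : ∫⁻ t in Ioc (0:ℝ) 1, ∫⁻ z in ball x r, F z t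
      ≤ ENNReal.ofReal (2 ^ d) * volume (ball (0 : Euc d) r) *
          maximalFn d (fun u => ‖fderiv ℝ φ u‖) v := by
    have : ∫⁻ t in Ioc (0:ℝ) 1, ∫⁻ z in ball x r, F z t
        ≤ ∫⁻ _ in Ioc (0:ℝ) 1, (ENNReal.ofReal (2 ^ d) * volume (ball (0 : Euc d) r) *
            maximalFn d (fun u => ‖fderiv ℝ φ u‖) v) := by
      apply setLIntegral_mono measurable_const
      intro t ht
      exact lint_scaled hd hφ v x hr hvx ht
    refine this.trans ?_
    rw [setLIntegral_const, Real.volume_Ioc]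
    norm_num
  calc ∫⁻ z in ball x r, ENNReal.ofReal |φ v - φ z|
      ≤ ∫⁻ z in ball x r, ENNReal.ofReal (2 * r) * ∫⁻ t in Ioc (0:ℝ) 1, F z t := step1
    _ = ENNReal.ofReal (2 * r) * ∫⁻ z in ball x r, ∫⁻ t in Ioc (0:ℝ) 1, F z t := step2
    _ = ENNReal.ofReal (2 * r) * ∫⁻ t in Ioc (0:ℝ) 1, ∫⁻ z in ball x r, F z t := by rw [step3]
    _ ≤ _ := mul_le_mul_right step4 _

end Aux

/-- There is a constant `C_d > 0` depending only on `d` such that for every `C¹`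
function `φ : ℝ^d → ℝ` with locally integrable gradient and all `x, y`,
`|φ(x) − φ(y)| ≤ C_d |x−y| (M|∇φ|(x) + M|∇φ|(y))`. -/
theorem abs_sub_le_maximal_fderiv (d : ℕ) (hd : 1 ≤ d) :
    ∃ C : ℝ, 0 < C ∧
      ∀ φ : Euc d → ℝ, ContDiff ℝ 1 φ →
        LocallyIntegrable (fun x => fderiv ℝ φ x) volume →
        ∀ x y : Euc d,
          ENNReal.ofReal |φ x - φ y| ≤
            ENNReal.ofReal (C * ‖x - y‖) *
              (maximalFn d (fun u => ‖fderiv ℝ φ u‖) x +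
                maximalFn d (fun u => ‖fderiv ℝ φ u‖) y) := by
  classical
  refine ⟨2 ^ (d + 1), by positivity, ?_⟩
  intro φ hφ _ x y
  by_cases hxy : x = y
  · simp [hxy]
  set r : ℝ := ‖x - y‖ with hrdef
  have hr : 0 < r := norm_pos_iff.mpr (sub_ne_zero.mpr hxy)
  set Mx := maximalFn d (fun u => ‖fderiv ℝ φ u‖) x with hMx
  set My := maximalFn d (fun u => ‖fderiv ℝ φ u‖) y with hMy
  set V := volume (Metric.ball (0 : Euc d) r) with hV
  have hV0 : V ≠ 0 := (Metric.measure_ball_pos volume 0 hr).ne'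
  have hVtop : V ≠ ⊤ := measure_ball_lt_top.ne
  have hconst : ENNReal.ofReal |φ x - φ y| * V
      = ∫⁻ _ in Metric.ball x r, ENNReal.ofReal |φ x - φ y| := by
    rw [setLIntegral_const, Measure.addHaar_ball_center]
  have htri : ∫⁻ _ in Metric.ball x r, ENNReal.ofReal |φ x - φ y|
      ≤ (∫⁻ z in Metric.ball x r, ENNReal.ofReal |φ x - φ z|)
        + ∫⁻ z in Metric.ball x r, ENNReal.ofReal |φ y - φ z| := by
    rw [← lintegral_add_left]
    · apply setLIntegral_mono
      · apply Measurable.fun_add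
        all_goals
          exact (ENNReal.continuous_ofReal.comp
            ((continuous_const.sub hφ.continuous).abs)).measurable
      · intro z _
        calc ENNReal.ofReal |φ x - φ y|
            ≤ ENNReal.ofReal (|φ x - φ z| + |φ z - φ y|) :=
              ENNReal.ofReal_le_ofReal (abs_sub_le _ _ _)
          _ ≤ ENNReal.ofReal |φ x - φ z| + ENNReal.ofReal |φ z - φ y| :=
              ENNReal.ofReal_add_le
          _ = ENNReal.ofReal |φ x - φ z| + ENNReal.ofReal |φ y - φ z| := by
              rw [abs_sub_comm (φ z)]
    · exact (ENNReal.continuous_ofReal.comp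
        ((continuous_const.sub hφ.continuous).abs)).measurable
  have hx' : ‖x - x‖ ≤ r := by simp [hr.le]
  have hy' : ‖x - y‖ ≤ r := le_of_eq hrdef.symm
  have hbx := avg_bound hd hφ x x hr hx'
  have hby := avg_bound hd hφ y x hr hy'
  have hcomb : ENNReal.ofReal |φ x - φ y| * V
      ≤ ENNReal.ofReal (2 * r) * (ENNReal.ofReal (2 ^ d) * V * (Mx + My)) := by
    calc ENNReal.ofReal |φ x - φ y| * V
        ≤ (∫⁻ z in Metric.ball x r, ENNReal.ofReal |φ x - φ z|)
          + ∫⁻ z in Metric.ball x r, ENNReal.ofReal |φ y - φ z| := hconst ▸ htri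
      _ ≤ ENNReal.ofReal (2 * r) * (ENNReal.ofReal (2 ^ d) * V * Mx)
          + ENNReal.ofReal (2 * r) * (ENNReal.ofReal (2 ^ d) * V * My) := add_le_add hbx hby
      _ = ENNReal.ofReal (2 * r) * (ENNReal.ofReal (2 ^ d) * V * (Mx + My)) := by ring
  have hfinal : ENNReal.ofReal |φ x - φ y|
      ≤ ENNReal.ofReal (2 * r) * ENNReal.ofReal (2 ^ d) * (Mx + My) := by
    rw [← ENNReal.mul_le_mul_iff_left hV0 hVtop]
    calc ENNReal.ofReal |φ x - φ y| * V
        ≤ ENNReal.ofReal (2 * r) * (ENNReal.ofReal (2 ^ d) * V * (Mx + My)) := hcomb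
      _ = ENNReal.ofReal (2 * r) * ENNReal.ofReal (2 ^ d) * (Mx + My) * V := by ring
  refine hfinal.trans (le_of_eq ?_)
  congr 1
  rw [← ENNReal.ofReal_mul (by positivity)]
  congr 1
  rw [hrdef]
  ring

end
end
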